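/- arXiv:2506.22522 — 2 statements merged into one kernel-verified Lean document; each statement's English description precedes it below -/
import Mathlib

section
/- Let 𝓕 = 𝓖 = ((e_m, e_m*))_{m≥1} be the canonical unconditional Schauder basis of c_0 with its coordinate functionals. Then for every u = ∑_{i=1}^k ∑_{j=1}^{k'} λ_{i,j} e_i ⊗ e_j in c_0 ⊗ c_0, α^Bess_{𝓕,𝓖}(u) = max_{1≤i≤k, 1≤j≤k'} |λ_{i,j}|, which equals the injective tensor norm ε(u) of u in c_0 ⊗ c_0. -/
open Filter Finset TensorProduct

variable {𝕂 : Type*} [RCLike 𝕂]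

/-- The canonical basis vector `e_n = (δ_{n,k})_k` of `c₀`. -/
noncomputable def c0Basis (𝕂 : Type*) [RCLike 𝕂] (n : ℕ) :
    ZeroAtInftyContinuousMap ℕ 𝕂 :=
  ⟨⟨fun k => if k = n then 1 else 0, continuous_of_discreteTopology⟩, by
    rw [cocompact_eq_atTop]
    have h : (fun k : ℕ => if k = n then (1 : 𝕂) else 0) =ᶠ[atTop] fun _ => 0 := by
      filter_upwards [Filter.eventually_gt_atTop n] with k hk
      simp [Nat.ne_of_gt hk]
    exact Filter.Tendsto.congr' h.symm tendsto_const_nhds⟩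

/-- The functional `f* ⊗ g*` on the algebraic tensor product. -/
noncomputable def dualPair {E F : Type*} [NormedAddCommGroup E] [NormedSpace 𝕂 E]
    [NormedAddCommGroup F] [NormedSpace 𝕂 F]
    (f : E →L[𝕂] 𝕂) (g : F →L[𝕂] 𝕂) : E ⊗[𝕂] F →ₗ[𝕂] 𝕂 :=
  TensorProduct.lift (((LinearMap.mul 𝕂 𝕂).compl₂ g.toLinearMap).comp f.toLinearMap)

/-- The Besselian crossnorm `α^Bess_{𝓕,𝓖}` on `c₀ ⊗ c₀`, where `𝓕 = 𝓖` is the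
canonical unconditional Schauder basis `((e_m, e_m*))` of `c₀` (so `e_m*(x) = x_m`). -/
noncomputable def alphaBessC0
    (u : ZeroAtInftyContinuousMap ℕ 𝕂 ⊗[𝕂] ZeroAtInftyContinuousMap ℕ 𝕂) : ℝ :=
  sInf {t : ℝ | ∃ (R : ℕ) (x y : ℕ → ZeroAtInftyContinuousMap ℕ 𝕂),
    u = ∑ r ∈ Finset.range R, x r ⊗ₜ[𝕂] y r ∧
    t = ⨆ fg : {f : ZeroAtInftyContinuousMap ℕ 𝕂 →L[𝕂] 𝕂 // ‖f‖ ≤ 1} ×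
          {g : ZeroAtInftyContinuousMap ℕ 𝕂 →L[𝕂] 𝕂 // ‖g‖ ≤ 1},
      ∑ r ∈ Finset.range R, ∑' mn : ℕ × ℕ,
        ‖x r mn.1‖ * ‖y r mn.2‖ * ‖fg.1.1 (c0Basis 𝕂 mn.1)‖ * ‖fg.2.1 (c0Basis 𝕂 mn.2)‖}

/-- The injective tensor norm `ε` on `c₀ ⊗ c₀` (with respect to the `c₀` norms). -/
noncomputable def injNormC0
    (u : ZeroAtInftyContinuousMap ℕ 𝕂 ⊗[𝕂] ZeroAtInftyContinuousMap ℕ 𝕂) : ℝ :=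
  ⨆ fg : {f : ZeroAtInftyContinuousMap ℕ 𝕂 →L[𝕂] 𝕂 // ‖f‖ ≤ 1} ×
      {g : ZeroAtInftyContinuousMap ℕ 𝕂 →L[𝕂] 𝕂 // ‖g‖ ≤ 1},
    ‖dualPair fg.1.1 fg.2.1 u‖

namespace AlphaBessAux

abbrev C0 (𝕂 : Type*) [RCLike 𝕂] := ZeroAtInftyContinuousMap ℕ 𝕂

lemma c0Basis_apply (n k : ℕ) : (c0Basis 𝕂 n) k = if k = n then 1 else 0 := rfl

lemma norm_apply_le (x : C0 𝕂) (i : ℕ) : ‖x i‖ ≤ ‖x‖ := by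
  rw [← ZeroAtInftyContinuousMap.norm_toBCF_eq_norm]
  exact BoundedContinuousFunction.norm_coe_le_norm x.toBCF i

lemma norm_le_of_forall {x : C0 𝕂} {C : ℝ} (hC : 0 ≤ C) (h : ∀ k, ‖x k‖ ≤ C) : ‖x‖ ≤ C := by
  rw [← ZeroAtInftyContinuousMap.norm_toBCF_eq_norm]
  exact (BoundedContinuousFunction.norm_le hC).2 h

/-- Evaluation at `i` as a continuous linear functional on `c₀`. -/
noncomputable def evalCLM (𝕂 : Type*) [RCLike 𝕂] (i : ℕ) : C0 𝕂 →L[𝕂] 𝕂 :=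
  LinearMap.mkContinuous
    { toFun := fun x => x i
      map_add' := fun x y => rfl
      map_smul' := fun c x => rfl } 1
    (fun x => by simpa using norm_apply_le x i)

lemma evalCLM_apply (i : ℕ) (x : C0 𝕂) : evalCLM 𝕂 i x = x i := rfl

lemma evalCLM_norm_le (i : ℕ) : ‖evalCLM 𝕂 i‖ ≤ 1 :=
  LinearMap.mkContinuous_norm_le _ zero_le_one _

lemma evalCLM_basis (i m : ℕ) : evalCLM 𝕂 i (c0Basis 𝕂 m) = if i = m then 1 else 0 := rfl

lemma norm_evalCLM_basis (i m : ℕ) :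
    ‖evalCLM 𝕂 i (c0Basis 𝕂 m)‖ = if i = m then 1 else 0 := by
  rw [evalCLM_basis]; split <;> simp

/-- Key ℓ¹ bound: partial sums of `‖f(e_m)‖` are bounded by `‖f‖`. -/
lemma sum_norm_basis_le (f : C0 𝕂 →L[𝕂] 𝕂) (F : Finset ℕ) :
    ∑ m ∈ F, ‖f (c0Basis 𝕂 m)‖ ≤ ‖f‖ := by
  classical
  set c : ℕ → 𝕂 := fun m =>
    if f (c0Basis 𝕂 m) = 0 then 0 else
      (starRingEnd 𝕂) (f (c0Basis 𝕂 m)) / (‖f (c0Basis 𝕂 m)‖ : 𝕂) with hc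
  have hcnorm : ∀ m, ‖c m‖ ≤ 1 := by
    intro m
    simp only [hc]
    split
    · simp
    · rename_i h
      rw [norm_div, RCLike.norm_conj]
      simp only [RCLike.norm_ofReal, abs_norm]
      rw [div_self (norm_ne_zero_iff.2 h)]
  have hcmul : ∀ m, c m * f (c0Basis 𝕂 m) = (‖f (c0Basis 𝕂 m)‖ : 𝕂) := by
    intro m
    simp only [hc]
    split
    · rename_i h; simp [h]
    · rename_i h
      rw [div_mul_eq_mul_div, RCLike.conj_mul]
      rw [show ((‖f (c0Basis 𝕂 m)‖ : 𝕂) ^ 2) = (‖f (c0Basis 𝕂 m)‖ : 𝕂) * ‖f (c0Basis 𝕂 m)‖ by ring]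
      rw [mul_div_assoc, div_self (by simpa using norm_ne_zero_iff.2 h), mul_one]
  set z : C0 𝕂 := ∑ m ∈ F, c m • c0Basis 𝕂 m with hz
  have hzk : ∀ kk, z kk = if kk ∈ F then c kk else 0 := by
    intro kk
    have : z kk = evalCLM 𝕂 kk z := rfl
    rw [this, hz, map_sum]
    simp only [map_smul, evalCLM_basis, smul_eq_mul, mul_ite, mul_one, mul_zero]
    exact Finset.sum_ite_eq F kk c
  have hznorm : ‖z‖ ≤ 1 := by
    apply norm_le_of_forall zero_le_one
    intro kk
    rw [hzk]
    split
    · exact hcnorm kk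
    · simp
  have hfz : f z = ((∑ m ∈ F, ‖f (c0Basis 𝕂 m)‖ : ℝ) : 𝕂) := by
    rw [hz, map_sum]
    simp only [map_smul, smul_eq_mul, hcmul]
    norm_cast

  calc ∑ m ∈ F, ‖f (c0Basis 𝕂 m)‖ = ‖f z‖ := by
        rw [hfz, RCLike.norm_ofReal]
        exact (abs_of_nonneg (Finset.sum_nonneg fun _ _ => norm_nonneg _)).symm
    _ ≤ ‖f‖ * ‖z‖ := f.le_opNorm z
    _ ≤ ‖f‖ * 1 := by gcongr
    _ = ‖f‖ := mul_one _

lemma summable_norm_basis (f : C0 𝕂 →L[𝕂] 𝕂) :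
    Summable fun m => ‖f (c0Basis 𝕂 m)‖ :=
  summable_of_sum_range_le (fun _ => norm_nonneg _) (fun n => sum_norm_basis_le f (range n))

lemma tsum_norm_basis_le (f : C0 𝕂 →L[𝕂] 𝕂) :
    ∑' m, ‖f (c0Basis 𝕂 m)‖ ≤ ‖f‖ :=
  Real.tsum_le_of_sum_range_le (fun _ => norm_nonneg _) (fun n => sum_norm_basis_le f (range n))

lemma summable_a (x : C0 𝕂) (f : C0 𝕂 →L[𝕂] 𝕂) :
    Summable fun m => ‖x m‖ * ‖f (c0Basis 𝕂 m)‖ :=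
  Summable.of_nonneg_of_le (fun m => by positivity)
    (fun m => mul_le_mul_of_nonneg_right (norm_apply_le x m) (norm_nonneg _))
    ((summable_norm_basis f).mul_left ‖x‖)

lemma tsum_a_le (x : C0 𝕂) (f : C0 𝕂 →L[𝕂] 𝕂) :
    ∑' m, ‖x m‖ * ‖f (c0Basis 𝕂 m)‖ ≤ ‖x‖ * ‖f‖ := by
  calc ∑' m, ‖x m‖ * ‖f (c0Basis 𝕂 m)‖
      ≤ ∑' m, ‖x‖ * ‖f (c0Basis 𝕂 m)‖ := by
        apply Summable.tsum_le_tsum _ (summable_a x f) ((summable_norm_basis f).mul_left ‖x‖)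
        intro m
        exact mul_le_mul_of_nonneg_right (norm_apply_le x m) (norm_nonneg _)
    _ = ‖x‖ * ∑' m, ‖f (c0Basis 𝕂 m)‖ := tsum_mul_left
    _ ≤ ‖x‖ * ‖f‖ := mul_le_mul_of_nonneg_left (tsum_norm_basis_le f) (norm_nonneg x)

/-- Factorization of the double `tsum` as a product. -/
lemma tsum_factor (x y : C0 𝕂) (f g : C0 𝕂 →L[𝕂] 𝕂) :
    ∑' mn : ℕ × ℕ, ‖x mn.1‖ * ‖y mn.2‖ * ‖f (c0Basis 𝕂 mn.1)‖ * ‖g (c0Basis 𝕂 mn.2)‖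
      = (∑' m, ‖x m‖ * ‖f (c0Basis 𝕂 m)‖) * (∑' n, ‖y n‖ * ‖g (c0Basis 𝕂 n)‖) := by
  have h1 : (fun mn : ℕ × ℕ =>
      ‖x mn.1‖ * ‖y mn.2‖ * ‖f (c0Basis 𝕂 mn.1)‖ * ‖g (c0Basis 𝕂 mn.2)‖)
      = fun mn : ℕ × ℕ =>
        (‖x mn.1‖ * ‖f (c0Basis 𝕂 mn.1)‖) * (‖y mn.2‖ * ‖g (c0Basis 𝕂 mn.2)‖) := by
    funext mn; ring
  rw [h1]
  have ha : Summable fun m => ‖‖x m‖ * ‖f (c0Basis 𝕂 m)‖‖ := by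
    simpa [Real.norm_eq_abs, abs_mul, abs_norm] using summable_a x f
  have hb : Summable fun n => ‖‖y n‖ * ‖g (c0Basis 𝕂 n)‖‖ := by
    simpa [Real.norm_eq_abs, abs_mul, abs_norm] using summable_a y g
  exact (tsum_mul_tsum_of_summable_norm (R := ℝ) ha hb).symm

lemma summable_double (x y : C0 𝕂) (f g : C0 𝕂 →L[𝕂] 𝕂) :
    Summable fun mn : ℕ × ℕ =>
      ‖x mn.1‖ * ‖y mn.2‖ * ‖f (c0Basis 𝕂 mn.1)‖ * ‖g (c0Basis 𝕂 mn.2)‖ := by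
  have h1 : (fun mn : ℕ × ℕ =>
      ‖x mn.1‖ * ‖y mn.2‖ * ‖f (c0Basis 𝕂 mn.1)‖ * ‖g (c0Basis 𝕂 mn.2)‖)
      = fun mn : ℕ × ℕ =>
        (‖x mn.1‖ * ‖f (c0Basis 𝕂 mn.1)‖) * (‖y mn.2‖ * ‖g (c0Basis 𝕂 mn.2)‖) := by
    funext mn; ring
  rw [h1]
  exact (summable_a x f).mul_of_nonneg (summable_a y g)
    (fun m => by positivity) (fun n => by positivity)

lemma bess_term_le (x y : C0 𝕂) {f g : C0 𝕂 →L[𝕂] 𝕂} (hf : ‖f‖ ≤ 1) (hg : ‖g‖ ≤ 1) :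
    ∑' mn : ℕ × ℕ, ‖x mn.1‖ * ‖y mn.2‖ * ‖f (c0Basis 𝕂 mn.1)‖ * ‖g (c0Basis 𝕂 mn.2)‖
      ≤ ‖x‖ * ‖y‖ := by
  rw [tsum_factor]
  have h1 : ∑' m, ‖x m‖ * ‖f (c0Basis 𝕂 m)‖ ≤ ‖x‖ :=
    (tsum_a_le x f).trans (by nlinarith [norm_nonneg x, norm_nonneg f])
  have h2 : ∑' n, ‖y n‖ * ‖g (c0Basis 𝕂 n)‖ ≤ ‖y‖ :=
    (tsum_a_le y g).trans (by nlinarith [norm_nonneg y, norm_nonneg g])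
  exact mul_le_mul h1 h2 (tsum_nonneg fun _ => by positivity) (norm_nonneg x)

end AlphaBessAux

namespace AlphaBessAux

lemma dualPair_tmul {E F : Type*} [NormedAddCommGroup E] [NormedSpace 𝕂 E]
    [NormedAddCommGroup F] [NormedSpace 𝕂 F]
    (f : E →L[𝕂] 𝕂) (g : F →L[𝕂] 𝕂) (x : E) (y : F) :
    dualPair f g (x ⊗ₜ[𝕂] y) = f x * g y := rfl

lemma tsum_delta (x y : C0 𝕂) (i j : ℕ) :
    ∑' mn : ℕ × ℕ, ‖x mn.1‖ * ‖y mn.2‖ * ‖evalCLM 𝕂 i (c0Basis 𝕂 mn.1)‖ *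
        ‖evalCLM 𝕂 j (c0Basis 𝕂 mn.2)‖ = ‖x i‖ * ‖y j‖ := by
  have h : (fun mn : ℕ × ℕ => ‖x mn.1‖ * ‖y mn.2‖ * ‖evalCLM 𝕂 i (c0Basis 𝕂 mn.1)‖ *
      ‖evalCLM 𝕂 j (c0Basis 𝕂 mn.2)‖)
      = fun mn : ℕ × ℕ => if mn = (i, j) then ‖x i‖ * ‖y j‖ else 0 := by
    funext mn
    rcases mn with ⟨m, n⟩
    rw [norm_evalCLM_basis, norm_evalCLM_basis]
    by_cases h1 : i = m <;> by_cases h2 : j = n <;>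
      simp [h1, h2, Prod.ext_iff, eq_comm]
  rw [h]
  exact tsum_ite_eq (i, j) _

end AlphaBessAux


/-- For the canonical unconditional Schauder basis `𝓕 = 𝓖 = ((e_m, e_m*))`
of `c₀`, the Besselian crossnorm of `u = ∑_{i<k} ∑_{j<k'} λ_{i,j} e_i ⊗ e_j` equals
`max_{i<k, j<k'} |λ_{i,j}|`, which is the injective tensor norm `ε(u)`. -/
theorem alphaBess_c0_eq_inj (k k' : ℕ) (lam : ℕ → ℕ → 𝕂) :
    alphaBessC0
        (∑ i ∈ Finset.range k, ∑ j ∈ Finset.range k',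
          lam i j • (c0Basis 𝕂 i ⊗ₜ[𝕂] c0Basis 𝕂 j)) =
      (⨆ ij : Fin k × Fin k', ‖lam ij.1 ij.2‖) ∧
    alphaBessC0
        (∑ i ∈ Finset.range k, ∑ j ∈ Finset.range k',
          lam i j • (c0Basis 𝕂 i ⊗ₜ[𝕂] c0Basis 𝕂 j)) =
      injNormC0
        (∑ i ∈ Finset.range k, ∑ j ∈ Finset.range k',
          lam i j • (c0Basis 𝕂 i ⊗ₜ[𝕂] c0Basis 𝕂 j)) := by
  classical
  open AlphaBessAux in
  set u : ZeroAtInftyContinuousMap ℕ 𝕂 ⊗[𝕂] ZeroAtInftyContinuousMap ℕ 𝕂 :=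
    ∑ i ∈ Finset.range k, ∑ j ∈ Finset.range k',
      lam i j • (c0Basis 𝕂 i ⊗ₜ[𝕂] c0Basis 𝕂 j) with hu
  set M : ℝ := ⨆ ij : Fin k × Fin k', ‖lam ij.1 ij.2‖ with hM
  have hM0 : 0 ≤ M := Real.iSup_nonneg fun _ => norm_nonneg _
  have hMle : ∀ i j, i < k → j < k' → ‖lam i j‖ ≤ M := by
    intro i j hi hj
    exact le_ciSup (f := fun ij : Fin k × Fin k' => ‖lam ij.1 ij.2‖)
      (Finite.bddAbove_range _) ⟨⟨i, hi⟩, ⟨j, hj⟩⟩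
  have hp0 : ‖(0 : ZeroAtInftyContinuousMap ℕ 𝕂 →L[𝕂] 𝕂)‖ ≤ 1 := by rw [ContinuousLinearMap.opNorm_zero]; exact zero_le_one
  -- evaluation of `dualPair` on `u`
  have hpair : ∀ f g : ZeroAtInftyContinuousMap ℕ 𝕂 →L[𝕂] 𝕂,
      dualPair f g u = ∑ i ∈ Finset.range k, ∑ j ∈ Finset.range k',
        lam i j * (f (c0Basis 𝕂 i) * g (c0Basis 𝕂 j)) := by
    intro f g
    rw [hu, map_sum]
    refine Finset.sum_congr rfl fun i _ => ?_
    rw [map_sum]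
    refine Finset.sum_congr rfl fun j _ => ?_
    rw [map_smul, dualPair_tmul, smul_eq_mul]
  have hcoeff : ∀ i j, i < k → j < k' →
      dualPair (evalCLM 𝕂 i) (evalCLM 𝕂 j) u = lam i j := by
    intro i j hi hj
    rw [hpair]
    rw [Finset.sum_eq_single_of_mem i (Finset.mem_range.2 hi)]
    · rw [Finset.sum_eq_single_of_mem j (Finset.mem_range.2 hj)]
      · simp [evalCLM_basis]
      · intro j' _ hj'
        simp [evalCLM_basis, (Ne.symm hj')]
    · intro i' _ hi'
      refine Finset.sum_eq_zero fun j' _ => ?_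
      simp [evalCLM_basis, (Ne.symm hi')]
  have hrepPair : ∀ (R : ℕ) (x y : ℕ → ZeroAtInftyContinuousMap ℕ 𝕂)
      (f g : ZeroAtInftyContinuousMap ℕ 𝕂 →L[𝕂] 𝕂),
      dualPair f g (∑ r ∈ Finset.range R, x r ⊗ₜ[𝕂] y r)
        = ∑ r ∈ Finset.range R, f (x r) * g (y r) := by
    intro R x y f g
    rw [map_sum]
    exact Finset.sum_congr rfl fun r _ => dualPair_tmul f g (x r) (y r)
  -- the Besselian set
  set SS : Set ℝ := {t : ℝ | ∃ (R : ℕ) (x y : ℕ → ZeroAtInftyContinuousMap ℕ 𝕂),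
    u = ∑ r ∈ Finset.range R, x r ⊗ₜ[𝕂] y r ∧
    t = ⨆ fg : {f : ZeroAtInftyContinuousMap ℕ 𝕂 →L[𝕂] 𝕂 // ‖f‖ ≤ 1} ×
          {g : ZeroAtInftyContinuousMap ℕ 𝕂 →L[𝕂] 𝕂 // ‖g‖ ≤ 1},
      ∑ r ∈ Finset.range R, ∑' mn : ℕ × ℕ,
        ‖x r mn.1‖ * ‖y r mn.2‖ * ‖fg.1.1 (c0Basis 𝕂 mn.1)‖ * ‖fg.2.1 (c0Basis 𝕂 mn.2)‖}
    with hSS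
  have halphaSS : alphaBessC0 u = sInf SS := rfl
  -- every element of SS is at least M
  have hlb : ∀ t ∈ SS, M ≤ t := by
    rintro t ⟨R, x, y, hrep, rfl⟩
    have hbdd : BddAbove (Set.range fun fg :
        {f : ZeroAtInftyContinuousMap ℕ 𝕂 →L[𝕂] 𝕂 // ‖f‖ ≤ 1} ×
        {g : ZeroAtInftyContinuousMap ℕ 𝕂 →L[𝕂] 𝕂 // ‖g‖ ≤ 1} =>
        ∑ r ∈ Finset.range R, ∑' mn : ℕ × ℕ,
          ‖x r mn.1‖ * ‖y r mn.2‖ * ‖fg.1.1 (c0Basis 𝕂 mn.1)‖ *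
            ‖fg.2.1 (c0Basis 𝕂 mn.2)‖) := by
      refine ⟨∑ r ∈ Finset.range R, ‖x r‖ * ‖y r‖, ?_⟩
      rintro _ ⟨fg, rfl⟩
      exact Finset.sum_le_sum fun r _ => bess_term_le (x r) (y r) fg.1.2 fg.2.2
    have ht0 : (0 : ℝ) ≤ ⨆ fg : {f : ZeroAtInftyContinuousMap ℕ 𝕂 →L[𝕂] 𝕂 // ‖f‖ ≤ 1} ×
        {g : ZeroAtInftyContinuousMap ℕ 𝕂 →L[𝕂] 𝕂 // ‖g‖ ≤ 1},
        ∑ r ∈ Finset.range R, ∑' mn : ℕ × ℕ,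
          ‖x r mn.1‖ * ‖y r mn.2‖ * ‖fg.1.1 (c0Basis 𝕂 mn.1)‖ *
            ‖fg.2.1 (c0Basis 𝕂 mn.2)‖ := by
      refine le_trans ?_ (le_ciSup hbdd ⟨⟨0, hp0⟩, ⟨0, hp0⟩⟩)
      exact Finset.sum_nonneg fun r _ => tsum_nonneg fun mn => by positivity
    refine Real.iSup_le ?_ ht0
    rintro ⟨⟨i, hi⟩, ⟨j, hj⟩⟩
    have h1 : ‖lam i j‖ ≤ ∑ r ∈ Finset.range R, ‖(x r) i‖ * ‖(y r) j‖ := by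
      calc ‖lam i j‖ = ‖dualPair (evalCLM 𝕂 i) (evalCLM 𝕂 j) u‖ := by
            rw [hcoeff i j hi hj]
        _ = ‖∑ r ∈ Finset.range R, (x r) i * (y r) j‖ := by
            rw [hrep, hrepPair]; rfl
        _ ≤ ∑ r ∈ Finset.range R, ‖(x r) i * (y r) j‖ := norm_sum_le _ _
        _ = ∑ r ∈ Finset.range R, ‖(x r) i‖ * ‖(y r) j‖ := by
            exact Finset.sum_congr rfl fun r _ => norm_mul _ _
    have h2 : ∑ r ∈ Finset.range R, ‖(x r) i‖ * ‖(y r) j‖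
        = ∑ r ∈ Finset.range R, ∑' mn : ℕ × ℕ,
          ‖x r mn.1‖ * ‖y r mn.2‖ * ‖evalCLM 𝕂 i (c0Basis 𝕂 mn.1)‖ *
            ‖evalCLM 𝕂 j (c0Basis 𝕂 mn.2)‖ :=
      Finset.sum_congr rfl fun r _ => (tsum_delta (x r) (y r) i j).symm
    refine h1.trans ?_
    rw [h2]
    exact le_ciSup hbdd ⟨⟨evalCLM 𝕂 i, evalCLM_norm_le i⟩, ⟨evalCLM 𝕂 j, evalCLM_norm_le j⟩⟩
  -- the good representation
  set w : ℕ → ZeroAtInftyContinuousMap ℕ 𝕂 :=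
    fun i => ∑ j ∈ Finset.range k', lam i j • c0Basis 𝕂 j with hw
  have hwn : ∀ i n, (w i) n = if n < k' then lam i n else 0 := by
    intro i n
    have h0 : (w i) n = evalCLM 𝕂 n (w i) := rfl
    rw [h0, hw, map_sum]
    simp only [map_smul, evalCLM_basis, smul_eq_mul, mul_ite, mul_one, mul_zero]
    rw [Finset.sum_ite_eq (Finset.range k') n]
    simp [Finset.mem_range]
  have hwle : ∀ i n, i < k → ‖(w i) n‖ ≤ M := by
    intro i n hi
    rw [hwn]
    split
    · exact hMle i n hi (by assumption)
    · simpa using hM0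
  have hrepw : u = ∑ i ∈ Finset.range k, c0Basis 𝕂 i ⊗ₜ[𝕂] w i := by
    rw [hu, hw]
    exact Finset.sum_congr rfl fun i _ => by rw [tmul_sum]; simp [tmul_smul]
  have hmem : (⨆ fg : {f : ZeroAtInftyContinuousMap ℕ 𝕂 →L[𝕂] 𝕂 // ‖f‖ ≤ 1} ×
      {g : ZeroAtInftyContinuousMap ℕ 𝕂 →L[𝕂] 𝕂 // ‖g‖ ≤ 1},
      ∑ r ∈ Finset.range k, ∑' mn : ℕ × ℕ,
        ‖c0Basis 𝕂 r mn.1‖ * ‖w r mn.2‖ * ‖fg.1.1 (c0Basis 𝕂 mn.1)‖ *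
          ‖fg.2.1 (c0Basis 𝕂 mn.2)‖) ∈ SS :=
    ⟨k, c0Basis 𝕂, w, hrepw, rfl⟩
  have hSw : ∀ f g : ZeroAtInftyContinuousMap ℕ 𝕂 →L[𝕂] 𝕂, ‖f‖ ≤ 1 → ‖g‖ ≤ 1 →
      ∑ r ∈ Finset.range k, ∑' mn : ℕ × ℕ,
        ‖c0Basis 𝕂 r mn.1‖ * ‖w r mn.2‖ * ‖f (c0Basis 𝕂 mn.1)‖ *
          ‖g (c0Basis 𝕂 mn.2)‖ ≤ M := by
    intro f g hf hg
    have key : ∀ i ∈ Finset.range k, (∑' mn : ℕ × ℕ,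
        ‖c0Basis 𝕂 i mn.1‖ * ‖w i mn.2‖ * ‖f (c0Basis 𝕂 mn.1)‖ *
          ‖g (c0Basis 𝕂 mn.2)‖) ≤ ‖f (c0Basis 𝕂 i)‖ * M := by
      intro i hi
      rw [tsum_factor]
      have hA : ∑' m, ‖c0Basis 𝕂 i m‖ * ‖f (c0Basis 𝕂 m)‖ = ‖f (c0Basis 𝕂 i)‖ := by
        have h : (fun m => ‖c0Basis 𝕂 i m‖ * ‖f (c0Basis 𝕂 m)‖)
            = fun m => if m = i then ‖f (c0Basis 𝕂 i)‖ else 0 := by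
          funext m
          rw [c0Basis_apply]
          by_cases h : m = i <;> simp [h]
        rw [h]
        exact tsum_ite_eq i _
      have hB : ∑' n, ‖w i n‖ * ‖g (c0Basis 𝕂 n)‖ ≤ M := by
        calc ∑' n, ‖w i n‖ * ‖g (c0Basis 𝕂 n)‖
            ≤ ∑' n, M * ‖g (c0Basis 𝕂 n)‖ := by
              refine Summable.tsum_le_tsum (fun n => ?_) (summable_a (w i) g)
                ((summable_norm_basis g).mul_left M)
              exact mul_le_mul_of_nonneg_right (hwle i n (Finset.mem_range.1 hi))
                (norm_nonneg _)
          _ = M * ∑' n, ‖g (c0Basis 𝕂 n)‖ := tsum_mul_left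
          _ ≤ M * 1 := mul_le_mul_of_nonneg_left ((tsum_norm_basis_le g).trans hg) hM0
          _ = M := mul_one M
      rw [hA]
      exact mul_le_mul_of_nonneg_left hB (norm_nonneg _)
    calc ∑ r ∈ Finset.range k, ∑' mn : ℕ × ℕ,
          ‖c0Basis 𝕂 r mn.1‖ * ‖w r mn.2‖ * ‖f (c0Basis 𝕂 mn.1)‖ * ‖g (c0Basis 𝕂 mn.2)‖
        ≤ ∑ i ∈ Finset.range k, ‖f (c0Basis 𝕂 i)‖ * M := Finset.sum_le_sum key
      _ = (∑ i ∈ Finset.range k, ‖f (c0Basis 𝕂 i)‖) * M := by rw [Finset.sum_mul]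
      _ ≤ 1 * M := mul_le_mul_of_nonneg_right ((sum_norm_basis_le f _).trans hf) hM0
      _ = M := one_mul M
  have htU : (⨆ fg : {f : ZeroAtInftyContinuousMap ℕ 𝕂 →L[𝕂] 𝕂 // ‖f‖ ≤ 1} ×
      {g : ZeroAtInftyContinuousMap ℕ 𝕂 →L[𝕂] 𝕂 // ‖g‖ ≤ 1},
      ∑ r ∈ Finset.range k, ∑' mn : ℕ × ℕ,
        ‖c0Basis 𝕂 r mn.1‖ * ‖w r mn.2‖ * ‖fg.1.1 (c0Basis 𝕂 mn.1)‖ *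
          ‖fg.2.1 (c0Basis 𝕂 mn.2)‖) ≤ M :=
    Real.iSup_le (fun fg => hSw fg.1.1 fg.2.1 fg.1.2 fg.2.2) hM0
  have halpha : alphaBessC0 u = M := by
    rw [halphaSS]
    exact le_antisymm ((csInf_le ⟨M, hlb⟩ hmem).trans htU) (le_csInf ⟨_, hmem⟩ hlb)
  -- the injective norm
  have hubInj : ∀ fg : {f : ZeroAtInftyContinuousMap ℕ 𝕂 →L[𝕂] 𝕂 // ‖f‖ ≤ 1} ×
      {g : ZeroAtInftyContinuousMap ℕ 𝕂 →L[𝕂] 𝕂 // ‖g‖ ≤ 1},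
      ‖dualPair fg.1.1 fg.2.1 u‖ ≤ M := by
    rintro ⟨⟨f, hf⟩, ⟨g, hg⟩⟩
    rw [hpair f g]
    calc ‖∑ i ∈ Finset.range k, ∑ j ∈ Finset.range k',
          lam i j * (f (c0Basis 𝕂 i) * g (c0Basis 𝕂 j))‖
        ≤ ∑ i ∈ Finset.range k, ∑ j ∈ Finset.range k',
          ‖lam i j‖ * (‖f (c0Basis 𝕂 i)‖ * ‖g (c0Basis 𝕂 j)‖) := by
          refine (norm_sum_le _ _).trans (Finset.sum_le_sum fun i _ => ?_)
          refine (norm_sum_le _ _).trans (Finset.sum_le_sum fun j _ => ?_)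
          rw [norm_mul, norm_mul]
      _ ≤ ∑ i ∈ Finset.range k, ∑ j ∈ Finset.range k',
          M * (‖f (c0Basis 𝕂 i)‖ * ‖g (c0Basis 𝕂 j)‖) := by
          refine Finset.sum_le_sum fun i hi => Finset.sum_le_sum fun j hj => ?_
          exact mul_le_mul_of_nonneg_right
            (hMle i j (Finset.mem_range.1 hi) (Finset.mem_range.1 hj)) (by positivity)
      _ = M * ((∑ i ∈ Finset.range k, ‖f (c0Basis 𝕂 i)‖) *
            (∑ j ∈ Finset.range k', ‖g (c0Basis 𝕂 j)‖)) := by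
          rw [Finset.sum_mul_sum, Finset.mul_sum]
          exact Finset.sum_congr rfl fun i _ => by rw [Finset.mul_sum]
      _ ≤ M * (1 * 1) := by
          refine mul_le_mul_of_nonneg_left ?_ hM0
          exact mul_le_mul ((sum_norm_basis_le f _).trans hf)
            ((sum_norm_basis_le g _).trans hg)
            (Finset.sum_nonneg fun _ _ => norm_nonneg _) zero_le_one
      _ = M := by ring
  have hbddinj : BddAbove (Set.range fun fg :
      {f : ZeroAtInftyContinuousMap ℕ 𝕂 →L[𝕂] 𝕂 // ‖f‖ ≤ 1} ×
      {g : ZeroAtInftyContinuousMap ℕ 𝕂 →L[𝕂] 𝕂 // ‖g‖ ≤ 1} =>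
      ‖dualPair fg.1.1 fg.2.1 u‖) := by
    refine ⟨M, ?_⟩
    rintro _ ⟨fg, rfl⟩
    exact hubInj fg
  haveI : Nonempty ({f : ZeroAtInftyContinuousMap ℕ 𝕂 →L[𝕂] 𝕂 // ‖f‖ ≤ 1} ×
      {g : ZeroAtInftyContinuousMap ℕ 𝕂 →L[𝕂] 𝕂 // ‖g‖ ≤ 1}) := ⟨⟨⟨0, hp0⟩, ⟨0, hp0⟩⟩⟩
  have hinj : injNormC0 u = M := by
    refine le_antisymm (ciSup_le hubInj) (Real.iSup_le ?_ ?_)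
    · rintro ⟨⟨i, hi⟩, ⟨j, hj⟩⟩
      have h := le_ciSup hbddinj
        ⟨⟨evalCLM 𝕂 i, evalCLM_norm_le i⟩, ⟨evalCLM 𝕂 j, evalCLM_norm_le j⟩⟩
      calc ‖lam i j‖ = ‖dualPair (evalCLM 𝕂 i) (evalCLM 𝕂 j) u‖ := by
            rw [hcoeff i j hi hj]
        _ ≤ injNormC0 u := h
    · exact le_trans (norm_nonneg _) (le_ciSup hbddinj ⟨⟨0, hp0⟩, ⟨0, hp0⟩⟩)
  exact ⟨halpha, halpha.trans hinj.symm⟩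
end

section
/- Let 𝓕 = 𝓖 = ((e_m, e_m*))_{m≥1} be the canonical unconditional Schauder basis of ℓ_1 with its coordinate functionals. Then for every u = ∑_{i=1}^k ∑_{j=1}^{k'} λ_{i,j} e_i ⊗ e_j in ℓ_1 ⊗ ℓ_1, α^Bess_{𝓕,𝓖}(u) = ∑_{i=1}^k ∑_{j=1}^{k'} |λ_{i,j}|, which equals the projective tensor norm π(u) of u in ℓ_1 ⊗ ℓ_1. -/
open Filter Finset TensorProduct
open scoped ENNReal

variable {𝕂 : Type*} [RCLike 𝕂]

/-- `ℓ_1` over `𝕂`. -/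
noncomputable abbrev ellOne (𝕂 : Type*) [RCLike 𝕂] := lp (fun _ : ℕ => 𝕂) 1

/-- The canonical basis vector `e_n` of `ℓ_1`. -/
noncomputable def eOne (𝕂 : Type*) [RCLike 𝕂] (n : ℕ) : ellOne 𝕂 :=
  lp.single 1 n (1 : 𝕂)

/-- The Besselian crossnorm `α^Bess_{𝓕,𝓖}` on `ℓ_1 ⊗ ℓ_1`, where `𝓕 = 𝓖` is the
canonical unconditional Schauder basis `((e_m, e_m*))` of `ℓ_1` (so `e_m*(x) = x_m`). -/
noncomputable def alphaBessL1 (u : ellOne 𝕂 ⊗[𝕂] ellOne 𝕂) : ℝ :=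
  sInf {t : ℝ | ∃ (R : ℕ) (x y : ℕ → ellOne 𝕂),
    u = ∑ r ∈ Finset.range R, x r ⊗ₜ[𝕂] y r ∧
    t = ⨆ fg : {f : ellOne 𝕂 →L[𝕂] 𝕂 // ‖f‖ ≤ 1} × {g : ellOne 𝕂 →L[𝕂] 𝕂 // ‖g‖ ≤ 1},
      ∑ r ∈ Finset.range R, ∑' mn : ℕ × ℕ,
        ‖x r mn.1‖ * ‖y r mn.2‖ * ‖fg.1.1 (eOne 𝕂 mn.1)‖ * ‖fg.2.1 (eOne 𝕂 mn.2)‖}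

/-- The projective tensor norm `π` on `ℓ_1 ⊗ ℓ_1` (with respect to the `ℓ_1` norms). -/
noncomputable def projNormL1 (u : ellOne 𝕂 ⊗[𝕂] ellOne 𝕂) : ℝ :=
  sInf {t : ℝ | ∃ (R : ℕ) (x y : ℕ → ellOne 𝕂),
    u = ∑ r ∈ Finset.range R, x r ⊗ₜ[𝕂] y r ∧
    t = ∑ r ∈ Finset.range R, ‖x r‖ * ‖y r‖}

/-! ### Auxiliary lemmas -/

set_option maxHeartbeats 1000000

lemma ellOne_hasSum_norm (f : ellOne 𝕂) : HasSum (fun i => ‖f i‖) ‖f‖ := by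
  have h := lp.hasSum_norm (p := 1) (E := fun _ : ℕ => 𝕂) (by norm_num) f
  simpa using h

lemma ellOne_norm_eq (f : ellOne 𝕂) : ‖f‖ = ∑' i, ‖f i‖ :=
  (ellOne_hasSum_norm f).tsum_eq.symm

lemma ellOne_summable_norm (f : ellOne 𝕂) : Summable (fun i => ‖f i‖) :=
  ⟨_, ellOne_hasSum_norm f⟩

lemma eOne_apply (n m : ℕ) : (eOne 𝕂 n) m = if m = n then 1 else 0 := by
  by_cases h : m = n
  · subst h; simp [eOne, lp.single_apply_self]
  · simp [eOne, lp.single_apply_ne _ _ _ h, h]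

lemma eOne_norm (n : ℕ) : ‖eOne 𝕂 n‖ = 1 := by
  have := lp.norm_single (p := 1) (E := fun _ : ℕ => 𝕂) (by norm_num) n (1:𝕂)
  simpa [eOne] using this

/-- The summation functional on `ℓ_1`, of norm at most `1`, sending each `e_n` to `1`. -/
noncomputable def sumL : ellOne 𝕂 →L[𝕂] 𝕂 :=
  LinearMap.mkContinuous
    { toFun := fun f => ∑' i, f i
      map_add' := fun f g => by
        simp only [lp.coeFn_add, Pi.add_apply]
        exact Summable.tsum_add ((ellOne_summable_norm f).of_norm) ((ellOne_summable_norm g).of_norm)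
      map_smul' := fun c f => by
        simp only [lp.coeFn_smul, Pi.smul_apply, RingHom.id_apply, smul_eq_mul]
        exact tsum_mul_left }
    1 (fun f => by
      simpa [ellOne_norm_eq f] using norm_tsum_le_tsum_norm (ellOne_summable_norm f))

lemma sumL_norm_le : ‖(sumL : ellOne 𝕂 →L[𝕂] 𝕂)‖ ≤ 1 :=
  LinearMap.mkContinuous_norm_le _ zero_le_one _

lemma sumL_eOne (n : ℕ) : sumL (eOne 𝕂 n) = 1 := by
  show ∑' m, (eOne 𝕂 n) m = 1
  simp only [eOne_apply]
  exact tsum_ite_eq n (fun _ => (1 : 𝕂))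

lemma tsum_term_le (x y : ellOne 𝕂) (f g : ellOne 𝕂 →L[𝕂] 𝕂) (hf : ‖f‖ ≤ 1) (hg : ‖g‖ ≤ 1) :
    ∑' mn : ℕ × ℕ, ‖x mn.1‖ * ‖y mn.2‖ * ‖f (eOne 𝕂 mn.1)‖ * ‖g (eOne 𝕂 mn.2)‖
      ≤ ‖x‖ * ‖y‖ := by
  have hfe : ∀ m, ‖f (eOne 𝕂 m)‖ ≤ 1 := fun m => by
    calc ‖f (eOne 𝕂 m)‖ ≤ ‖f‖ * ‖eOne 𝕂 m‖ := f.le_opNorm _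
    _ ≤ 1 := by rw [eOne_norm]; simpa using hf
  have hge : ∀ m, ‖g (eOne 𝕂 m)‖ ≤ 1 := fun m => by
    calc ‖g (eOne 𝕂 m)‖ ≤ ‖g‖ * ‖eOne 𝕂 m‖ := g.le_opNorm _
    _ ≤ 1 := by rw [eOne_norm]; simpa using hg
  have hsum : HasSum (fun mn : ℕ × ℕ => ‖x mn.1‖ * ‖y mn.2‖) (‖x‖ * ‖y‖) :=
    (ellOne_hasSum_norm x).mul (ellOne_hasSum_norm y)
      ((ellOne_summable_norm x).mul_of_nonneg (ellOne_summable_norm y)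
        (fun _ => norm_nonneg _) (fun _ => norm_nonneg _))
  have hle : ∀ mn : ℕ × ℕ,
      ‖x mn.1‖ * ‖y mn.2‖ * ‖f (eOne 𝕂 mn.1)‖ * ‖g (eOne 𝕂 mn.2)‖ ≤ ‖x mn.1‖ * ‖y mn.2‖ := by
    intro mn
    have hre : ‖x mn.1‖ * ‖y mn.2‖ * ‖f (eOne 𝕂 mn.1)‖ * ‖g (eOne 𝕂 mn.2)‖
        = ‖x mn.1‖ * ‖y mn.2‖ * (‖f (eOne 𝕂 mn.1)‖ * ‖g (eOne 𝕂 mn.2)‖) := by ring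
    rw [hre]
    exact mul_le_of_le_one_right (mul_nonneg (norm_nonneg _) (norm_nonneg _))
      (mul_le_one₀ (hfe _) (norm_nonneg _) (hge _))
  calc ∑' mn : ℕ × ℕ, ‖x mn.1‖ * ‖y mn.2‖ * ‖f (eOne 𝕂 mn.1)‖ * ‖g (eOne 𝕂 mn.2)‖
      ≤ ∑' mn : ℕ × ℕ, ‖x mn.1‖ * ‖y mn.2‖ :=
        Summable.tsum_le_tsum hle
          (hsum.summable.of_nonneg_of_le (fun mn => by positivity) hle)
          hsum.summable
    _ = ‖x‖ * ‖y‖ := hsum.tsum_eq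

lemma tsum_term_eq (x y : ellOne 𝕂) :
    ∑' mn : ℕ × ℕ, ‖x mn.1‖ * ‖y mn.2‖ * ‖(sumL (𝕂 := 𝕂)) (eOne 𝕂 mn.1)‖ *
      ‖(sumL (𝕂 := 𝕂)) (eOne 𝕂 mn.2)‖ = ‖x‖ * ‖y‖ := by
  have hsum : HasSum (fun mn : ℕ × ℕ => ‖x mn.1‖ * ‖y mn.2‖) (‖x‖ * ‖y‖) :=
    (ellOne_hasSum_norm x).mul (ellOne_hasSum_norm y)
      ((ellOne_summable_norm x).mul_of_nonneg (ellOne_summable_norm y)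
        (fun _ => norm_nonneg _) (fun _ => norm_nonneg _))
  have h : ∀ mn : ℕ × ℕ,
      ‖x mn.1‖ * ‖y mn.2‖ * ‖(sumL (𝕂 := 𝕂)) (eOne 𝕂 mn.1)‖ * ‖(sumL (𝕂 := 𝕂)) (eOne 𝕂 mn.2)‖
        = ‖x mn.1‖ * ‖y mn.2‖ := by
    intro mn; rw [sumL_eOne, sumL_eOne]; simp
  rw [tsum_congr h, hsum.tsum_eq]

lemma sup_eq (R : ℕ) (x y : ℕ → ellOne 𝕂) :
    (⨆ fg : {f : ellOne 𝕂 →L[𝕂] 𝕂 // ‖f‖ ≤ 1} × {g : ellOne 𝕂 →L[𝕂] 𝕂 // ‖g‖ ≤ 1},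
      ∑ r ∈ Finset.range R, ∑' mn : ℕ × ℕ,
        ‖x r mn.1‖ * ‖y r mn.2‖ * ‖fg.1.1 (eOne 𝕂 mn.1)‖ * ‖fg.2.1 (eOne 𝕂 mn.2)‖)
    = ∑ r ∈ Finset.range R, ‖x r‖ * ‖y r‖ := by
  have hub : ∀ fg : {f : ellOne 𝕂 →L[𝕂] 𝕂 // ‖f‖ ≤ 1} × {g : ellOne 𝕂 →L[𝕂] 𝕂 // ‖g‖ ≤ 1},
      (∑ r ∈ Finset.range R, ∑' mn : ℕ × ℕ,
        ‖x r mn.1‖ * ‖y r mn.2‖ * ‖fg.1.1 (eOne 𝕂 mn.1)‖ * ‖fg.2.1 (eOne 𝕂 mn.2)‖)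
      ≤ ∑ r ∈ Finset.range R, ‖x r‖ * ‖y r‖ := by
    intro fg
    exact Finset.sum_le_sum fun r _ => tsum_term_le (x r) (y r) fg.1.1 fg.2.1 fg.1.2 fg.2.2
  have hbdd : BddAbove (Set.range fun fg :
      {f : ellOne 𝕂 →L[𝕂] 𝕂 // ‖f‖ ≤ 1} × {g : ellOne 𝕂 →L[𝕂] 𝕂 // ‖g‖ ≤ 1} =>
      ∑ r ∈ Finset.range R, ∑' mn : ℕ × ℕ,
        ‖x r mn.1‖ * ‖y r mn.2‖ * ‖fg.1.1 (eOne 𝕂 mn.1)‖ * ‖fg.2.1 (eOne 𝕂 mn.2)‖) :=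
    ⟨_, Set.forall_mem_range.2 hub⟩
  haveI : Nonempty ({f : ellOne 𝕂 →L[𝕂] 𝕂 // ‖f‖ ≤ 1} × {g : ellOne 𝕂 →L[𝕂] 𝕂 // ‖g‖ ≤ 1}) :=
    ⟨⟨⟨sumL, sumL_norm_le⟩, ⟨sumL, sumL_norm_le⟩⟩⟩
  refine le_antisymm (ciSup_le hub) ?_
  have hpt := le_ciSup hbdd
    (⟨⟨sumL, sumL_norm_le⟩, ⟨sumL, sumL_norm_le⟩⟩ :
      {f : ellOne 𝕂 →L[𝕂] 𝕂 // ‖f‖ ≤ 1} × {g : ellOne 𝕂 →L[𝕂] 𝕂 // ‖g‖ ≤ 1})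
  calc ∑ r ∈ Finset.range R, ‖x r‖ * ‖y r‖
      = ∑ r ∈ Finset.range R, ∑' mn : ℕ × ℕ,
        ‖x r mn.1‖ * ‖y r mn.2‖ * ‖(sumL (𝕂 := 𝕂)) (eOne 𝕂 mn.1)‖ *
          ‖(sumL (𝕂 := 𝕂)) (eOne 𝕂 mn.2)‖ :=
        (Finset.sum_congr rfl fun r _ => (tsum_term_eq (x r) (y r)).symm)
    _ ≤ _ := hpt

lemma alphaBess_eq_projNorm (u : ellOne 𝕂 ⊗[𝕂] ellOne 𝕂) : alphaBessL1 u = projNormL1 u := by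
  unfold alphaBessL1 projNormL1
  congr 1
  ext t
  constructor
  · rintro ⟨R, x, y, hrep, ht⟩; exact ⟨R, x, y, hrep, ht.trans (sup_eq R x y)⟩
  · rintro ⟨R, x, y, hrep, ht⟩; exact ⟨R, x, y, hrep, ht.trans (sup_eq R x y).symm⟩

lemma sum_range_mul' {M : Type*} [AddCommMonoid M] (k k' : ℕ) (f : ℕ → ℕ → M) :
    ∑ r ∈ Finset.range (k * k'), f (r / k') (r % k') =
    ∑ i ∈ Finset.range k, ∑ j ∈ Finset.range k', f i j := by
  rcases Nat.eq_zero_or_pos k' with h | h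
  · simp [h]
  rw [← Finset.sum_product']
  refine Finset.sum_nbij' (fun r => (r / k', r % k')) (fun p => p.1 * k' + p.2) ?_ ?_ ?_ ?_ ?_
  · intro r hr
    simp only [Finset.mem_range] at hr
    simp only [Finset.mem_product, Finset.mem_range]
    exact ⟨Nat.div_lt_of_lt_mul (by rwa [mul_comm] at hr), Nat.mod_lt _ h⟩
  · intro p hp
    simp only [Finset.mem_product, Finset.mem_range] at hp
    simp only [Finset.mem_range]
    calc p.1 * k' + p.2 < p.1 * k' + k' := by omega
      _ = (p.1 + 1) * k' := by ring
      _ ≤ k * k' := Nat.mul_le_mul_right _ hp.1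
  · intro r _
    exact Nat.div_add_mod' r k'
  · intro p hp
    simp only [Finset.mem_product, Finset.mem_range] at hp
    have h1 : (p.1 * k' + p.2) / k' = p.1 := by
      rw [Nat.mul_comm p.1 k', Nat.mul_add_div h, Nat.div_eq_of_lt hp.2, Nat.add_zero]
    have h2 : (p.1 * k' + p.2) % k' = p.2 := by
      rw [Nat.mul_comm p.1 k', Nat.mul_add_mod, Nat.mod_eq_of_lt hp.2]
    exact Prod.ext h1 h2
  · intro r _; rfl

/-- The coordinate functional `e_i*` as a linear map. -/
noncomputable def coordL (i : ℕ) : ellOne 𝕂 →ₗ[𝕂] 𝕂 where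
  toFun f := f i
  map_add' f g := by simp [lp.coeFn_add]
  map_smul' c f := by simp [lp.coeFn_smul]

/-- The functional `e_i* ⊗ e_j*` on the algebraic tensor product. -/
noncomputable def PhiL (i j : ℕ) : ellOne 𝕂 ⊗[𝕂] ellOne 𝕂 →ₗ[𝕂] 𝕂 :=
  TensorProduct.lift (((LinearMap.mul 𝕂 𝕂).compl₂ (coordL j)).comp (coordL i))

@[simp] lemma PhiL_tmul (i j : ℕ) (a b : ellOne 𝕂) : PhiL i j (a ⊗ₜ[𝕂] b) = a i * b j := rfl

lemma coeff_eq (k k' : ℕ) (lam : ℕ → ℕ → 𝕂) {i j : ℕ} (hi : i < k) (hj : j < k') :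
    PhiL i j (∑ i' ∈ Finset.range k, ∑ j' ∈ Finset.range k',
      lam i' j' • (eOne 𝕂 i' ⊗ₜ[𝕂] eOne 𝕂 j')) = lam i j := by
  rw [map_sum]
  rw [Finset.sum_eq_single i]
  · rw [map_sum, Finset.sum_eq_single j]
    · rw [map_smul, PhiL_tmul, eOne_apply, eOne_apply, if_pos rfl, if_pos rfl]
      simp
    · intro b _ hb
      rw [map_smul, PhiL_tmul, eOne_apply, eOne_apply]
      simp [if_neg (Ne.symm hb)]
    · intro hjm; exact absurd (Finset.mem_range.2 hj) hjm
  · intro a _ ha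
    rw [map_sum, Finset.sum_eq_zero]
    intro b _
    rw [map_smul, PhiL_tmul, eOne_apply]
    simp [if_neg (Ne.symm ha)]
  · intro him; exact absurd (Finset.mem_range.2 hi) him

lemma proj_lower (k k' : ℕ) (lam : ℕ → ℕ → 𝕂) (R : ℕ) (x y : ℕ → ellOne 𝕂)
    (hrep : (∑ i ∈ Finset.range k, ∑ j ∈ Finset.range k',
        lam i j • (eOne 𝕂 i ⊗ₜ[𝕂] eOne 𝕂 j)) = ∑ r ∈ Finset.range R, x r ⊗ₜ[𝕂] y r) :
    (∑ i ∈ Finset.range k, ∑ j ∈ Finset.range k', ‖lam i j‖)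
      ≤ ∑ r ∈ Finset.range R, ‖x r‖ * ‖y r‖ := by
  have hc : ∀ i ∈ Finset.range k, ∀ j ∈ Finset.range k',
      lam i j = ∑ r ∈ Finset.range R, (x r) i * (y r) j := by
    intro i hi j hj
    rw [Finset.mem_range] at hi hj
    have := coeff_eq k k' lam hi hj
    rw [hrep, map_sum] at this
    simpa using this.symm
  calc ∑ i ∈ Finset.range k, ∑ j ∈ Finset.range k', ‖lam i j‖
      ≤ ∑ i ∈ Finset.range k, ∑ j ∈ Finset.range k',
          ∑ r ∈ Finset.range R, ‖(x r) i‖ * ‖(y r) j‖ := by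
        refine Finset.sum_le_sum fun i hi => Finset.sum_le_sum fun j hj => ?_
        rw [hc i hi j hj]
        refine (norm_sum_le _ _).trans ?_
        exact Finset.sum_le_sum fun r _ => (norm_mul_le _ _)
    _ = ∑ r ∈ Finset.range R,
          (∑ i ∈ Finset.range k, ‖(x r) i‖) * (∑ j ∈ Finset.range k', ‖(y r) j‖) := by
        have hswap : ∀ i, (∑ j ∈ Finset.range k', ∑ r ∈ Finset.range R,
            ‖(x r) i‖ * ‖(y r) j‖)
            = ∑ r ∈ Finset.range R, ∑ j ∈ Finset.range k', ‖(x r) i‖ * ‖(y r) j‖ :=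
          fun i => Finset.sum_comm
        simp_rw [hswap, Finset.sum_mul_sum]
        exact Finset.sum_comm
    _ ≤ ∑ r ∈ Finset.range R, ‖x r‖ * ‖y r‖ := by
        refine Finset.sum_le_sum fun r _ => ?_
        have hx : (∑ i ∈ Finset.range k, ‖(x r) i‖) ≤ ‖x r‖ := by
          rw [ellOne_norm_eq]
          exact Summable.sum_le_tsum _ (fun i _ => norm_nonneg _) (ellOne_summable_norm (x r))
        have hy : (∑ j ∈ Finset.range k', ‖(y r) j‖) ≤ ‖y r‖ := by
          rw [ellOne_norm_eq]
          exact Summable.sum_le_tsum _ (fun j _ => norm_nonneg _) (ellOne_summable_norm (y r))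
        exact mul_le_mul hx hy (Finset.sum_nonneg fun j _ => norm_nonneg _) (norm_nonneg _)

lemma proj_eq (k k' : ℕ) (lam : ℕ → ℕ → 𝕂) :
    projNormL1 (∑ i ∈ Finset.range k, ∑ j ∈ Finset.range k',
        lam i j • (eOne 𝕂 i ⊗ₜ[𝕂] eOne 𝕂 j)) =
      ∑ i ∈ Finset.range k, ∑ j ∈ Finset.range k', ‖lam i j‖ := by
  set u := ∑ i ∈ Finset.range k, ∑ j ∈ Finset.range k',
      lam i j • (eOne 𝕂 i ⊗ₜ[𝕂] eOne 𝕂 j) with hu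
  set T := ∑ i ∈ Finset.range k, ∑ j ∈ Finset.range k', ‖lam i j‖ with hT
  have hmem : T ∈ {t : ℝ | ∃ (R : ℕ) (x y : ℕ → ellOne 𝕂),
      u = ∑ r ∈ Finset.range R, x r ⊗ₜ[𝕂] y r ∧
      t = ∑ r ∈ Finset.range R, ‖x r‖ * ‖y r‖} := by
    refine ⟨k * k', fun r => lam (r / k') (r % k') • eOne 𝕂 (r / k'),
      fun r => eOne 𝕂 (r % k'), ?_, ?_⟩
    · rw [sum_range_mul' k k'
        (fun i j => (lam i j • eOne 𝕂 i) ⊗ₜ[𝕂] eOne 𝕂 j)]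
      exact Finset.sum_congr rfl fun i _ => Finset.sum_congr rfl fun j _ =>
        (TensorProduct.smul_tmul' _ _ _).symm
    · rw [sum_range_mul' k k'
        (fun i j => ‖lam i j • eOne 𝕂 i‖ * ‖eOne 𝕂 j‖)]
      refine (Finset.sum_congr rfl fun i _ => Finset.sum_congr rfl fun j _ => ?_).symm
      rw [norm_smul, eOne_norm, eOne_norm]
      simp
  have hlb : ∀ t ∈ {t : ℝ | ∃ (R : ℕ) (x y : ℕ → ellOne 𝕂),
      u = ∑ r ∈ Finset.range R, x r ⊗ₜ[𝕂] y r ∧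
      t = ∑ r ∈ Finset.range R, ‖x r‖ * ‖y r‖}, T ≤ t := by
    rintro t ⟨R, x, y, hrep, ht⟩
    rw [ht]
    exact proj_lower k k' lam R x y hrep
  exact le_antisymm (csInf_le ⟨T, hlb⟩ hmem) (le_csInf ⟨T, hmem⟩ hlb)

/-- For the canonical unconditional Schauder basis `𝓕 = 𝓖 = ((e_m, e_m*))`
of `ℓ_1`, the Besselian crossnorm of `u = ∑_{i<k} ∑_{j<k'} λ_{i,j} e_i ⊗ e_j` equals
`∑_{i<k} ∑_{j<k'} |λ_{i,j}|`, which is the projective tensor norm `π(u)`. -/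
theorem alphaBess_ellOne_eq_proj (k k' : ℕ) (lam : ℕ → ℕ → 𝕂) :
    alphaBessL1
        (∑ i ∈ Finset.range k, ∑ j ∈ Finset.range k',
          lam i j • (eOne 𝕂 i ⊗ₜ[𝕂] eOne 𝕂 j)) =
      ∑ i ∈ Finset.range k, ∑ j ∈ Finset.range k', ‖lam i j‖ ∧
    alphaBessL1
        (∑ i ∈ Finset.range k, ∑ j ∈ Finset.range k',
          lam i j • (eOne 𝕂 i ⊗ₜ[𝕂] eOne 𝕂 j)) =
      projNormL1
        (∑ i ∈ Finset.range k, ∑ j ∈ Finset.range k',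
          lam i j • (eOne 𝕂 i ⊗ₜ[𝕂] eOne 𝕂 j)) := by
  refine ⟨?_, alphaBess_eq_projNorm _⟩
  rw [alphaBess_eq_projNorm, proj_eq]
end
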